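/- Let p > 1 and x ≥ 0 be real numbers. There exists A > 1 such that 1 + A^p · x ≤ A if and only if x ≤ (p-1)^{p-1}/p^p. -/

import Mathlib

theorem key_ineq (p A : ℝ) (hp : 1 < p) (hA : 0 ≤ A) :
    A ≤ 1 + (p - 1) ^ (p - 1) / p ^ p * A ^ p := by
  have hp0 : (0:ℝ) < p := lt_trans one_pos hp
  have hp1 : (0:ℝ) < p - 1 := by linarith
  set c : ℝ := (p - 1) ^ (p - 1) / p ^ p with hc
  have hc0 : 0 ≤ c := div_nonneg (Real.rpow_nonneg hp1.le _) (Real.rpow_nonneg hp0.le _)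
  set q : ℝ := (p - 1) / p with hq
  have hq0 : 0 < q := div_pos hp1 hp0
  have hApos : 0 ≤ A ^ p := Real.rpow_nonneg hA _
  have key := Real.geom_mean_le_arith_mean2_weighted
      (w₁ := 1 / p) (w₂ := (p - 1) / p) (p₁ := p * c * A ^ p) (p₂ := p / (p - 1))
      (by positivity) (by positivity)
      (by positivity) (by positivity) (by field_simp; ring)
  have hpc : p * c = q ^ (p - 1) := by
    have hpp : p ^ p = p ^ (p - 1) * p := by
      rw [← Real.rpow_add_one hp0.ne']; ring_nf
    rw [hc, hq, Real.div_rpow hp1.le hp0.le, hpp]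
    have h1 : p ^ (p-1) ≠ 0 := (Real.rpow_pos_of_pos hp0 _).ne'
    field_simp
  have h1 : (q ^ (p - 1)) ^ (1 / p) = q ^ ((p - 1) / p) := by
    rw [← Real.rpow_mul hq0.le, mul_one_div]
  have h2 : (A ^ p) ^ (1 / p) = A := by
    rw [← Real.rpow_mul hA, mul_one_div, div_self hp0.ne', Real.rpow_one]
  have h3 : (p / (p - 1)) ^ ((p - 1) / p) = q ^ (-((p - 1) / p)) := by
    rw [show p / (p - 1) = q⁻¹ by rw [hq, inv_div], Real.inv_rpow hq0.le, ← Real.rpow_neg hq0.le]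
  have hgm : (p * c * A ^ p) ^ (1 / p) * (p / (p - 1)) ^ ((p - 1) / p) = A := by
    rw [hpc, Real.mul_rpow (Real.rpow_nonneg hq0.le _) hApos, h1, h2, h3,
      mul_right_comm, ← Real.rpow_add hq0, add_neg_cancel, Real.rpow_zero, one_mul]
  rw [hgm] at key
  have hsum : 1 / p * (p * c * A ^ p) + (p - 1) / p * (p / (p - 1)) = c * A ^ p + 1 := by
    field_simp
  rw [hsum] at key
  linarith

theorem stmt_1 (p x : ℝ) (hp : 1 < p) (hx : 0 ≤ x) :
    (∃ A : ℝ, 1 < A ∧ 1 + A ^ p * x ≤ A) ↔ x ≤ (p - 1) ^ (p - 1) / p ^ p := by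
  have hp0 : (0:ℝ) < p := lt_trans one_pos hp
  have hp1 : (0:ℝ) < p - 1 := by linarith
  set c : ℝ := (p - 1) ^ (p - 1) / p ^ p with hc
  constructor
  · rintro ⟨A, hA1, hAle⟩
    have hA0 : (0:ℝ) < A := lt_trans one_pos hA1
    have hAp : 0 < A ^ p := Real.rpow_pos_of_pos hA0 _
    have hk := key_ineq p A hp hA0.le
    have : x * A ^ p ≤ c * A ^ p := by rw [mul_comm]; linarith
    exact le_of_mul_le_mul_right this hAp
  · intro hxc
    refine ⟨p / (p - 1), (one_lt_div hp1).mpr (by linarith), ?_⟩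
    have hAp : (0:ℝ) < (p / (p - 1)) ^ p := Real.rpow_pos_of_pos (div_pos hp0 hp1) _
    have hAc : (p / (p - 1)) ^ p * c = 1 / (p - 1) := by
      have hpp : (p - 1) ^ p = (p - 1) ^ (p - 1) * (p - 1) := by
        rw [← Real.rpow_add_one hp1.ne']; ring_nf
      rw [hc, Real.div_rpow hp0.le hp1.le, hpp]
      have h1 : (p:ℝ) ^ p ≠ 0 := (Real.rpow_pos_of_pos hp0 _).ne'
      have h2 : (p - 1:ℝ) ^ (p - 1) ≠ 0 := (Real.rpow_pos_of_pos hp1 _).ne'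
      field_simp
    have hmul : (p / (p - 1)) ^ p * x ≤ 1 / (p - 1) := by
      rw [← hAc]
      exact mul_le_mul_of_nonneg_left hxc hAp.le
    have : 1 + 1 / (p - 1) = p / (p - 1) := by field_simp; ring
    linarith
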